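/- Let n ∈ ℕ and let α, β ∈ DPS_n. Then α and β are J-related in DPS_n (i.e., there exist u,v,s,t ∈ DPS_n with α = uβv and β = sαt) if and only if one of the following holds: (1) the domains of α and β both have exactly 1 element; (2) the domains of α and β have the same number of elements and 0 belongs to neither domain; (3) the domains of α and β have the same number of elements and 0 belongs to both domains. -/

import Mathlib

namespace DPSPaper

instance instMonoidPFun {V : Type*} : Monoid (V →. V) where
  mul f g := g.comp f
  one := PFun.id V
  mul_assoc a b c := (PFun.comp_assoc c b a).symm
  one_mul := PFun.comp_id
  mul_one := PFun.id_comp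

/-- The geodesic distance in the star graph `S_n` on vertices `{0,1,...,n-1}`. -/
def starDist (n : ℕ) (x y : Fin n) : ℕ :=
  if x = y then 0 else if (x : ℕ) = 0 ∨ (y : ℕ) = 0 then 1 else 2

/-- Injectivity of a partial map. -/
def PInj {n : ℕ} (α : Fin n →. Fin n) : Prop :=
  ∀ ⦃x y a : Fin n⦄, a ∈ α x → a ∈ α y → x = y

/-- `α` is a partial isometry of the star graph `S_n`. -/
def IsStarPI {n : ℕ} (α : Fin n →. Fin n) : Prop :=
  PInj α ∧ ∀ ⦃x y u v : Fin n⦄, u ∈ α x → v ∈ α y → starDist n u v = starDist n x y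

/-- The set of all partial isometries of `S_n`. -/
def DPSset (n : ℕ) : Set (Fin n →. Fin n) := { α | IsStarPI α }

/-! ### Auxiliary lemmas -/

lemma mem_mul {n : ℕ} {p q : Fin n →. Fin n} {x a : Fin n} :
    a ∈ (p * q) x ↔ ∃ b, b ∈ p x ∧ a ∈ q b := by
  show a ∈ (q.comp p) x ↔ _
  rw [PFun.comp_apply]
  exact Part.mem_bind_iff

lemma starDist_self {n : ℕ} (x : Fin n) : starDist n x x = 0 := by
  simp [starDist]

lemma starDist_eq_zero {n : ℕ} {x y : Fin n} (h : starDist n x y = 0) : x = y := by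
  by_contra hne
  simp only [starDist, if_neg hne] at h
  split at h <;> omega

lemma starDist_congr {n : ℕ} {x y x' y' : Fin n}
    (h1 : x = y ↔ x' = y')
    (h2 : ((x : ℕ) = 0 ∨ (y : ℕ) = 0) ↔ ((x' : ℕ) = 0 ∨ (y' : ℕ) = 0)) :
    starDist n x' y' = starDist n x y := by
  unfold starDist
  by_cases hxy : x = y
  · rw [if_pos hxy, if_pos (h1.mp hxy)]
  · rw [if_neg hxy, if_neg (fun h => hxy (h1.mpr h))]
    by_cases hz : (x : ℕ) = 0 ∨ (y : ℕ) = 0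
    · rw [if_pos hz, if_pos (h2.mp hz)]
    · rw [if_neg hz, if_neg (fun h => hz (h2.mpr h))]

lemma val_zero_iff {n : ℕ} [NeZero n] (a : Fin n) : (a : ℕ) = 0 ↔ a = 0 :=
  ⟨fun h => Fin.ext (by simp [h]), fun h => by simp [h]⟩

/-- The inverse of a partial map (using choice). -/
noncomputable def pinv {n : ℕ} (p : Fin n →. Fin n) : Fin n →. Fin n :=
  fun y => ⟨∃ x, y ∈ p x, fun h => Classical.choose h⟩

lemma mem_pinv {n : ℕ} {p : Fin n →. Fin n} (hp : PInj p) {a y : Fin n} :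
    a ∈ pinv p y ↔ y ∈ p a := by
  constructor
  · rintro ⟨h, rfl⟩
    exact Classical.choose_spec h
  · intro h
    refine ⟨⟨a, h⟩, ?_⟩
    exact hp (Classical.choose_spec (⟨a, h⟩ : ∃ x, y ∈ p x)) h

lemma IsStarPI.mul {n : ℕ} {p q : Fin n →. Fin n} (hp : IsStarPI p) (hq : IsStarPI q) :
    IsStarPI (p * q) := by
  constructor
  · intro x y a hx hy
    rw [mem_mul] at hx hy
    obtain ⟨b, hb, hab⟩ := hx
    obtain ⟨b', hb', hab'⟩ := hy
    have : b = b' := hq.1 hab hab'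
    subst this
    exact hp.1 hb hb'
  · intro x y u v hu hv
    rw [mem_mul] at hu hv
    obtain ⟨b, hb, hub⟩ := hu
    obtain ⟨b', hb', hvb'⟩ := hv
    rw [hq.2 hub hvb', hp.2 hb hb']

lemma IsStarPI.pinv {n : ℕ} {p : Fin n →. Fin n} (hp : IsStarPI p) :
    IsStarPI (pinv p) := by
  constructor
  · intro x y a hx hy
    rw [mem_pinv hp.1] at hx hy
    exact starDist_eq_zero (by rw [hp.2 hx hy, starDist_self])
  · intro x y u v hu hv
    rw [mem_pinv hp.1] at hu hv
    exact (hp.2 hu hv).symm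

/-- The key construction: if there is a distance-preserving bijection between the
domains, then `α` factors through `β`. -/
lemma exists_factor {n : ℕ} (α β : Fin n →. Fin n) (hα : IsStarPI α) (hβ : IsStarPI β)
    (e : ↥α.Dom ≃ ↥β.Dom)
    (he : ∀ x y : ↥α.Dom, starDist n (e x : Fin n) (e y : Fin n) = starDist n (x : Fin n) (y : Fin n)) :
    ∃ u v : Fin n →. Fin n, IsStarPI u ∧ IsStarPI v ∧ α = u * β * v := by
  classical
  -- the partial map induced by e
  set u : Fin n →. Fin n := fun x => ⟨x ∈ α.Dom, fun h => (e ⟨x, h⟩ : Fin n)⟩ with hu_def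
  have hmem_u : ∀ {x a : Fin n}, a ∈ u x ↔ ∃ h : x ∈ α.Dom, (e ⟨x, h⟩ : Fin n) = a := by
    intro x a; rfl
  have hu : IsStarPI u := by
    constructor
    · rintro x y a ⟨hx, rfl⟩ ⟨hy, hxy⟩
      have : e ⟨y, hy⟩ = e ⟨x, hx⟩ := Subtype.ext hxy
      have := e.injective this
      exact (congrArg Subtype.val this).symm
    · rintro x y a b ⟨hx, rfl⟩ ⟨hy, rfl⟩
      exact he ⟨x, hx⟩ ⟨y, hy⟩
  set w : Fin n →. Fin n := u * β with hw_def
  have hw : IsStarPI w := hu.mul hβ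
  -- dom α ⊆ dom w
  have hdom : ∀ x ∈ α.Dom, ∃ c, c ∈ w x := by
    intro x hx
    have hb : ((e ⟨x, hx⟩ : Fin n)) ∈ β.Dom := (e ⟨x, hx⟩).2
    rw [PFun.mem_dom] at hb
    obtain ⟨c, hc⟩ := hb
    exact ⟨c, mem_mul.mpr ⟨_, ⟨hx, rfl⟩, hc⟩⟩
  refine ⟨u, pinv w * α, hu, (hw.pinv).mul hα, ?_⟩
  have : u * β * (DPSPaper.pinv w * α) = w * (DPSPaper.pinv w * α) := by rw [hw_def]
  rw [this]
  apply PFun.ext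
  intro x a
  constructor
  · intro h
    have hx : x ∈ α.Dom := PFun.mem_dom α x |>.mpr ⟨a, h⟩
    obtain ⟨c, hc⟩ := hdom x hx
    exact mem_mul.mpr ⟨c, hc, mem_mul.mpr ⟨x, (mem_pinv hw.1).mpr hc, h⟩⟩
  · intro h
    rw [mem_mul] at h
    obtain ⟨c, hc, h2⟩ := h
    rw [mem_mul] at h2
    obtain ⟨x', hx', ha⟩ := h2
    rw [mem_pinv hw.1] at hx'
    have : x' = x := hw.1 hx' hc
    subst this
    exact ha

/-- Rank can only decrease under factorization. -/
lemma ncard_dom_le {n : ℕ} {α β u v : Fin n →. Fin n} (hu : PInj u)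
    (hfac : α = u * β * v) : α.Dom.ncard ≤ β.Dom.ncard := by
  classical
  set f : Fin n → Fin n := fun x => if h : (u x).Dom then (u x).get h else x with hf
  apply Set.ncard_le_ncard_of_injOn f
  · intro x hx
    rw [PFun.mem_dom] at hx
    obtain ⟨a, ha⟩ := hx
    rw [hfac, mem_mul] at ha
    obtain ⟨c, hc, h2⟩ := ha
    rw [mem_mul] at hc
    obtain ⟨b, hb, hcb⟩ := hc
    have hdom : (u x).Dom := Part.dom_iff_mem.mpr ⟨b, hb⟩
    have : f x = b := by
      rw [hf]; simp only [dif_pos hdom]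
      exact Part.mem_unique (Part.get_mem hdom) hb
    rw [this]
    exact PFun.mem_dom β b |>.mpr ⟨c, hcb⟩
  · intro x hx y hy hxy
    rw [PFun.mem_dom] at hx hy
    obtain ⟨a, ha⟩ := hx
    obtain ⟨a', ha'⟩ := hy
    rw [hfac, mem_mul] at ha ha'
    obtain ⟨c, hc, -⟩ := ha
    obtain ⟨c', hc', -⟩ := ha'
    rw [mem_mul] at hc hc'
    obtain ⟨b, hb, -⟩ := hc
    obtain ⟨b', hb', -⟩ := hc'
    have hdx : (u x).Dom := Part.dom_iff_mem.mpr ⟨b, hb⟩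
    have hdy : (u y).Dom := Part.dom_iff_mem.mpr ⟨b', hb'⟩
    have hfx : f x ∈ u x := by rw [hf]; simp only [dif_pos hdx]; exact Part.get_mem hdx
    have hfy : f y ∈ u y := by rw [hf]; simp only [dif_pos hdy]; exact Part.get_mem hdy
    rw [hxy] at hfx
    exact hu hfx hfy

/-- The obstruction: a factorization cannot move `0` out of the domain when the rank
is at least 2. -/
lemma obstruction {n : ℕ} [NeZero n] {α β u v : Fin n →. Fin n}
    (hu : IsStarPI u) (hfac : α = u * β * v)
    (h0 : (0 : Fin n) ∈ α.Dom) (h2 : 2 ≤ α.Dom.ncard) (h0β : (0 : Fin n) ∉ β.Dom) :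
    False := by
  obtain ⟨y, hy, hy0⟩ := Set.exists_ne_of_one_lt_ncard (s := α.Dom) (by omega) (0 : Fin n)
  -- images of 0 and y under u land in β.Dom
  have key : ∀ x ∈ α.Dom, ∃ b, b ∈ u x ∧ b ∈ β.Dom := by
    intro x hx
    rw [PFun.mem_dom] at hx
    obtain ⟨a, ha⟩ := hx
    rw [hfac, mem_mul] at ha
    obtain ⟨c, hc, -⟩ := ha
    rw [mem_mul] at hc
    obtain ⟨b, hb, hcb⟩ := hc
    exact ⟨b, hb, PFun.mem_dom β b |>.mpr ⟨c, hcb⟩⟩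
  obtain ⟨b0, hb0, hb0d⟩ := key 0 h0
  obtain ⟨b1, hb1, hb1d⟩ := key y hy
  have hdist : starDist n b0 b1 = starDist n (0 : Fin n) y := hu.2 hb0 hb1
  have h0y : starDist n (0 : Fin n) y = 1 := by
    simp [starDist, (Ne.symm hy0)]
  rw [h0y] at hdist
  have hb00 : b0 ≠ 0 := fun h => h0β (h ▸ hb0d)
  have hb10 : b1 ≠ 0 := fun h => h0β (h ▸ hb1d)
  have hne : b0 ≠ b1 := by
    intro h; rw [h, starDist_self] at hdist; omega
  have hv0 : ¬((b0 : ℕ) = 0 ∨ (b1 : ℕ) = 0) := by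
    rintro (h | h)
    · exact hb00 ((val_zero_iff b0).mp h)
    · exact hb10 ((val_zero_iff b1).mp h)
  simp only [starDist, if_neg hne, if_neg hv0] at hdist
  omega

theorem statement7 (n : ℕ) [NeZero n] (α β : Fin n →. Fin n)
    (hα : IsStarPI α) (hβ : IsStarPI β) :
    (∃ u v s t : Fin n →. Fin n, IsStarPI u ∧ IsStarPI v ∧ IsStarPI s ∧ IsStarPI t ∧
        α = u * β * v ∧ β = s * α * t) ↔
      ((α.Dom.ncard = 1 ∧ β.Dom.ncard = 1) ∨
        (α.Dom.ncard = β.Dom.ncard ∧ (0 : Fin n) ∉ α.Dom ∧ (0 : Fin n) ∉ β.Dom) ∨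
        (α.Dom.ncard = β.Dom.ncard ∧ (0 : Fin n) ∈ α.Dom ∧ (0 : Fin n) ∈ β.Dom)) := by
  classical
  constructor
  · rintro ⟨u, v, s, t, hu, hv, hs, ht, hfac1, hfac2⟩
    have hle1 : α.Dom.ncard ≤ β.Dom.ncard := ncard_dom_le hu.1 hfac1
    have hle2 : β.Dom.ncard ≤ α.Dom.ncard := ncard_dom_le hs.1 hfac2
    have hcard : α.Dom.ncard = β.Dom.ncard := le_antisymm hle1 hle2
    by_cases hc1 : α.Dom.ncard = 1
    · exact Or.inl ⟨hc1, hcard ▸ hc1⟩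
    · by_cases h0α : (0 : Fin n) ∈ α.Dom
      · have h2 : 2 ≤ α.Dom.ncard := by
          have : α.Dom.ncard ≠ 0 := by
            intro h
            rw [Set.ncard_eq_zero (Set.toFinite _)] at h
            exact absurd h0α (h ▸ Set.notMem_empty _)
          omega
        refine Or.inr (Or.inr ⟨hcard, h0α, ?_⟩)
        by_contra h0β
        exact obstruction hu hfac1 h0α h2 h0β
      · refine Or.inr (Or.inl ⟨hcard, h0α, ?_⟩)
        intro h0β
        have h2 : 2 ≤ β.Dom.ncard := by
          have : β.Dom.ncard ≠ 0 := by
            intro h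
            rw [Set.ncard_eq_zero (Set.toFinite _)] at h
            exact absurd h0β (h ▸ Set.notMem_empty _)
          omega
        exact obstruction hs hfac2 h0β h2 h0α
  · intro h
    -- In all cases we produce a distance-preserving equiv between the domains.
    have main : ∃ e : ↥α.Dom ≃ ↥β.Dom, ∀ x y : ↥α.Dom,
        starDist n (e x : Fin n) (e y : Fin n) = starDist n (x : Fin n) (y : Fin n) := by
      have hcard : α.Dom.ncard = β.Dom.ncard := by
        rcases h with ⟨h1, h2⟩ | ⟨h1, -⟩ | ⟨h1, -⟩
        · rw [h1, h2]
        · exact h1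
        · exact h1
      have hncard : Nat.card ↥α.Dom = Nat.card ↥β.Dom := by
        rw [Nat.card_coe_set_eq, Nat.card_coe_set_eq, hcard]
      obtain ⟨e0⟩ := Finite.card_eq.mp hncard
      rcases h with ⟨h1, h2⟩ | ⟨-, h0α, h0β⟩ | ⟨-, h0α, h0β⟩
      · -- rank 1: domains are subsingletons
        have hsub : ∀ x y : ↥α.Dom, x = y := by
          intro x y
          obtain ⟨a, ha⟩ := Set.ncard_eq_one.mp h1
          have hx : (x : Fin n) = a := Set.eq_of_mem_singleton (ha ▸ x.2)
          have hy : (y : Fin n) = a := Set.eq_of_mem_singleton (ha ▸ y.2)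
          exact Subtype.ext (hx.trans hy.symm)
        refine ⟨e0, fun x y => ?_⟩
        rw [hsub x y, starDist_self, starDist_self]
      · -- 0 in neither domain
        refine ⟨e0, fun x y => ?_⟩
        apply starDist_congr
        · exact ⟨fun hxy => congrArg (fun z => ((e0 z : Fin n))) (Subtype.ext hxy),
            fun hxy => congrArg Subtype.val (e0.injective (Subtype.ext hxy))⟩
        · constructor
          · rintro (hx | hy)
            · exact absurd x.2 (by rwa [show (x : Fin n) = 0 from Fin.ext (by simpa using hx)])
            · exact absurd y.2 (by rwa [show (y : Fin n) = 0 from Fin.ext (by simpa using hy)])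
          · rintro (hx | hy)
            · exact absurd (e0 x).2 (by rwa [show ((e0 x) : Fin n) = 0 from Fin.ext (by simpa using hx)])
            · exact absurd (e0 y).2 (by rwa [show ((e0 y) : Fin n) = 0 from Fin.ext (by simpa using hy)])
      · -- 0 in both domains
        set z₁ : ↥α.Dom := ⟨0, h0α⟩
        set z₂ : ↥β.Dom := ⟨0, h0β⟩
        set e : ↥α.Dom ≃ ↥β.Dom := e0.trans (Equiv.swap (e0 z₁) z₂) with he_def
        have hez : e z₁ = z₂ := by
          simp [he_def, Equiv.swap_apply_left]
        have hz_iff : ∀ x : ↥α.Dom, (x : Fin n) = 0 ↔ ((e x) : Fin n) = 0 := by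
          intro x
          constructor
          · intro hx
            have : x = z₁ := Subtype.ext hx
            rw [this, hez]
          · intro hx
            have : e x = z₂ := Subtype.ext hx
            rw [← hez] at this
            have := e.injective this
            rw [this]
        refine ⟨e, fun x y => ?_⟩
        apply starDist_congr
        · exact ⟨fun hxy => congrArg (fun z => ((e z : Fin n))) (Subtype.ext hxy),
            fun hxy => congrArg Subtype.val (e.injective (Subtype.ext hxy))⟩
        · have hx := hz_iff x
          have hy := hz_iff y
          constructor
          · rintro (h' | h')
            · exact Or.inl ((val_zero_iff _).mpr (hx.mp ((val_zero_iff _).mp h')))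
            · exact Or.inr ((val_zero_iff _).mpr (hy.mp ((val_zero_iff _).mp h')))
          · rintro (h' | h')
            · exact Or.inl ((val_zero_iff _).mpr (hx.mpr ((val_zero_iff _).mp h')))
            · exact Or.inr ((val_zero_iff _).mpr (hy.mpr ((val_zero_iff _).mp h')))
    obtain ⟨e, he⟩ := main
    obtain ⟨u, v, hu, hv, hfac1⟩ := exists_factor α β hα hβ e he
    have he' : ∀ x y : ↥β.Dom,
        starDist n ((e.symm x) : Fin n) ((e.symm y) : Fin n) = starDist n (x : Fin n) (y : Fin n) := by
      intro x y
      have := he (e.symm x) (e.symm y)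
      rw [e.apply_symm_apply, e.apply_symm_apply] at this
      exact this.symm
    obtain ⟨s, t, hs, ht, hfac2⟩ := exists_factor β α hβ hα e.symm he'
    exact ⟨u, v, s, t, hu, hv, hs, ht, hfac1, hfac2⟩

end DPSPaper
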